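/- arXiv:2312.15986 — 2 statements merged into one kernel-verified Lean document; each statement's English description precedes it below -/
import Mathlib

section
/- An S-invariant right integral form is two-sided: if λ : H → 1 satisfies (id_H ⊗ λ) ∘ Δ = η ∘ λ and λ ∘ S = λ, then also (λ ⊗ id_H) ∘ Δ = η ∘ λ. -/
open CategoryTheory MonoidalCategory

universe v u

/-- A braided Hopf algebra (Hopf monoid) in a braided monoidal category:
an object `H` with product, unit, coproduct, counit, and antipode satisfying
the standard braided Hopf algebra axioms. -/
structure BraidedHopfAlgebra (C : Type u) [Category.{v} C] [MonoidalCategory C]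
    [BraidedCategory C] where
  H : C
  mul : H ⊗ H ⟶ H
  unit : 𝟙_ C ⟶ H
  comul : H ⟶ H ⊗ H
  counit : H ⟶ 𝟙_ C
  antipode : H ⟶ H
  mul_assoc : (mul ⊗ₘ 𝟙 H) ≫ mul = (α_ H H H).hom ≫ (𝟙 H ⊗ₘ mul) ≫ mul
  unit_left : (unit ⊗ₘ 𝟙 H) ≫ mul = (λ_ H).hom
  unit_right : (𝟙 H ⊗ₘ unit) ≫ mul = (ρ_ H).hom
  comul_coassoc : comul ≫ (comul ⊗ₘ 𝟙 H) = comul ≫ (𝟙 H ⊗ₘ comul) ≫ (α_ H H H).inv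
  counit_left : comul ≫ (counit ⊗ₘ 𝟙 H) = (λ_ H).inv
  counit_right : comul ≫ (𝟙 H ⊗ₘ counit) = (ρ_ H).inv
  mul_comul : mul ≫ comul =
    (comul ⊗ₘ comul) ≫ (α_ H H (H ⊗ H)).hom ≫ (𝟙 H ⊗ₘ (α_ H H H).inv) ≫
      (𝟙 H ⊗ₘ ((β_ H H).hom ⊗ₘ 𝟙 H)) ≫ (𝟙 H ⊗ₘ (α_ H H H).hom) ≫
      (α_ H H (H ⊗ H)).inv ≫ (mul ⊗ₘ mul)
  counit_mul : mul ≫ counit = (counit ⊗ₘ counit) ≫ (λ_ (𝟙_ C)).hom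
  comul_unit : unit ≫ comul = (λ_ (𝟙_ C)).inv ≫ (unit ⊗ₘ unit)
  counit_unit : unit ≫ counit = 𝟙 (𝟙_ C)
  antipode_left : comul ≫ (antipode ⊗ₘ 𝟙 H) ≫ mul = counit ≫ unit
  antipode_right : comul ≫ (𝟙 H ⊗ₘ antipode) ≫ mul = counit ≫ unit

variable {C : Type u} [Category.{v} C] [MonoidalCategory C] [BraidedCategory C]


set_option maxHeartbeats 1000000 in
/-- The underlying monoid object. -/
noncomputable def BraidedHopfAlgebra.toMon (A : BraidedHopfAlgebra C) : MonObj A.H where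
  one := A.unit
  mul := A.mul
  one_mul := by simpa using A.unit_left
  mul_one := by simpa using A.unit_right
  mul_assoc := by simpa using A.mul_assoc

set_option maxHeartbeats 1000000 in
/-- The underlying bimonoid object. -/
noncomputable def BraidedHopfAlgebra.toBimon (A : BraidedHopfAlgebra C) : BimonObj A.H :=
  letI := A.toMon
  { counit := A.counit
    comul := A.comul
    counit_comul := by simpa using A.counit_left
    comul_counit := by simpa using A.counit_right
    comul_assoc := by
      have h2 : A.comul ≫ A.H ◁ A.comul = A.comul ≫ A.comul ▷ A.H ≫ (α_ A.H A.H A.H).hom := by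
        have := A.comul_coassoc
        rw [show ((A.comul ⊗ₘ 𝟙 A.H) : A.H ⊗ A.H ⟶ _) = A.comul ▷ A.H by simp,
          show ((𝟙 A.H ⊗ₘ A.comul) : A.H ⊗ A.H ⟶ _) = A.H ◁ A.comul by simp] at this
        conv_rhs => rw [← Category.assoc, this]
        simp
      exact h2
    mul_comul := by
      show A.mul ≫ A.comul = (A.comul ⊗ₘ A.comul) ≫ tensorμ _ _ _ _ ≫ (A.mul ⊗ₘ A.mul)
      simpa [tensorμ, Category.assoc] using A.mul_comul
    one_comul := by
      show A.unit ≫ A.comul = (λ_ (𝟙_ C)).inv ≫ (A.unit ⊗ₘ A.unit)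
      exact A.comul_unit
    mul_counit := by
      show A.mul ≫ A.counit = (A.counit ⊗ₘ A.counit) ≫ (λ_ (𝟙_ C)).hom
      exact A.counit_mul
    one_counit := A.counit_unit }

set_option maxHeartbeats 1000000 in
/-- Package a `BraidedHopfAlgebra` as a Mathlib `Hopf_`. -/
noncomputable def BraidedHopfAlgebra.toHopf (A : BraidedHopfAlgebra C) : HopfObj A.H :=
  letI := A.toBimon
  { antipode := A.antipode
    antipode_left := by
      show A.comul ≫ A.antipode ▷ A.H ≫ A.mul = A.counit ≫ A.unit
      simpa using A.antipode_left
    antipode_right := by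
      show A.comul ≫ A.H ◁ A.antipode ≫ A.mul = A.counit ≫ A.unit
      simpa using A.antipode_right }

/-- An `S`-invariant right integral form is two-sided. -/
theorem integral_form_two_sided (A : BraidedHopfAlgebra C) [IsIso A.antipode]
    (l : A.H ⟶ 𝟙_ C)
    (hr : A.comul ≫ (𝟙 A.H ⊗ₘ l) ≫ (ρ_ A.H).hom = l ≫ A.unit)
    (hS : A.antipode ≫ l = l) :
    A.comul ≫ (l ⊗ₘ 𝟙 A.H) ≫ (λ_ A.H).hom = l ≫ A.unit := by
  letI := A.toHopf
  have key : A.antipode ≫ A.comul = A.comul ≫ (β_ _ _).hom ≫ (A.antipode ⊗ₘ A.antipode) :=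
    HopfObj.antipode_comul A.H
  have one_anti : A.unit ≫ A.antipode = A.unit := HopfObj.one_antipode A.H
  have e2 : A.antipode ≫ A.comul ≫ (𝟙 A.H ⊗ₘ l) ≫ (ρ_ A.H).hom = l ≫ A.unit := by
    rw [hr, reassoc_of% hS]
  have h1 : (A.antipode ⊗ₘ A.antipode) ≫ (𝟙 A.H ⊗ₘ l) = A.antipode ⊗ₘ l := by
    rw [tensorHom_comp_tensorHom, Category.comp_id, hS]
  have h2 : (l ⊗ₘ A.antipode) ≫ (β_ (𝟙_ C) A.H).hom = (β_ A.H A.H).hom ≫ (A.antipode ⊗ₘ l) :=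
    BraidedCategory.braiding_naturality l A.antipode
  have h3 : (β_ (𝟙_ C) A.H).hom ≫ (ρ_ A.H).hom = (λ_ A.H).hom :=
    braiding_rightUnitor A.H
  have e4 : A.comul ≫ (l ⊗ₘ A.antipode) ≫ (λ_ A.H).hom = l ≫ A.unit := by
    calc A.comul ≫ (l ⊗ₘ A.antipode) ≫ (λ_ A.H).hom
        = A.comul ≫ (l ⊗ₘ A.antipode) ≫ (β_ (𝟙_ C) A.H).hom ≫ (ρ_ A.H).hom := by rw [h3]
      _ = A.comul ≫ (β_ A.H A.H).hom ≫ (A.antipode ⊗ₘ l) ≫ (ρ_ A.H).hom := by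
          rw [← reassoc_of% h2]
      _ = A.comul ≫ (β_ A.H A.H).hom ≫ ((A.antipode ⊗ₘ A.antipode) ≫ (𝟙 A.H ⊗ₘ l)) ≫
            (ρ_ A.H).hom := by rw [h1]
      _ = A.antipode ≫ A.comul ≫ (𝟙 A.H ⊗ₘ l) ≫ (ρ_ A.H).hom := by
          rw [reassoc_of% key]; simp only [Category.assoc]
      _ = l ≫ A.unit := e2
  rw [← cancel_mono A.antipode]
  have lhs : (A.comul ≫ (l ⊗ₘ 𝟙 A.H) ≫ (λ_ A.H).hom) ≫ A.antipode
      = A.comul ≫ (l ⊗ₘ A.antipode) ≫ (λ_ A.H).hom := by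
    simp only [Category.assoc, ← leftUnitor_naturality]
    rw [← MonoidalCategory.id_tensorHom, tensorHom_comp_tensorHom_assoc, Category.id_comp,
      Category.comp_id]
  rw [lhs, e4, Category.assoc, one_anti]
end

section
/- The integral element Λ is a two-sided unit for the Frobenius product μ̃ := (id_H ⊗ ev) ∘ (Δ ⊗ id_H), where ev := λ ∘ μ ∘ (id ⊗ S): namely μ̃ ∘ (Λ ⊗ id_H) = id_H = μ̃ ∘ (id_H ⊗ Λ). -/
open CategoryTheory MonoidalCategory

universe v u

variable {C : Type u} [Category.{v} C] [MonoidalCategory C] [BraidedCategory C]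


namespace BraidedHopfAlgebraProof

noncomputable section

open MonObj ComonObj in
/-- The underlying monoid. -/
instance toMon (A : BraidedHopfAlgebra C) : MonObj A.H where
  one := A.unit
  mul := A.mul
  one_mul := by simpa [tensorHom_id] using A.unit_left
  mul_one := by simpa [id_tensorHom] using A.unit_right
  mul_assoc := by simpa [tensorHom_id, id_tensorHom] using A.mul_assoc

/-- The underlying comonoid. -/
instance toComon (A : BraidedHopfAlgebra C) : ComonObj A.H where
  counit := A.counit
  comul := A.comul
  counit_comul := by simpa [tensorHom_id] using A.counit_left
  comul_counit := by simpa [id_tensorHom] using A.counit_right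
  comul_assoc := by
    rw [← id_tensorHom, ← tensorHom_id, reassoc_of% A.comul_coassoc]
    simp

/-- The underlying bimonoid. -/
instance toBimon (A : BraidedHopfAlgebra C) : BimonObj A.H where
  mul_comul := by
    show A.mul ≫ A.comul = _
    rw [A.mul_comul]
    dsimp [tensorμ]
    simp only [tensorHom_id, id_tensorHom, Category.assoc]
    rfl
  one_comul := by
    show A.unit ≫ A.comul = (λ_ (𝟙_ C)).inv ≫ (A.unit ⊗ₘ A.unit)
    exact A.comul_unit
  mul_counit := by
    show A.mul ≫ A.counit = (A.counit ⊗ₘ A.counit) ≫ (λ_ _).hom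
    exact A.counit_mul
  one_counit := A.counit_unit

/-- The Hopf monoid in the sense of Mathlib. -/
instance toHopf (A : BraidedHopfAlgebra C) : HopfObj A.H where
  antipode := A.antipode
  antipode_left := by have := A.antipode_left; simp only [tensorHom_id] at this; exact this
  antipode_right := by have := A.antipode_right; simp only [id_tensorHom] at this; exact this

theorem mul_antipode (A : BraidedHopfAlgebra C) :
    A.mul ≫ A.antipode = (A.antipode ⊗ₘ A.antipode) ≫ (β_ A.H A.H).hom ≫ A.mul :=
  HopfObj.mul_antipode A.H

theorem antipode_counit (A : BraidedHopfAlgebra C) :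
    A.antipode ≫ A.counit = A.counit :=
  HopfObj.antipode_counit A.H

section Pure

variable (H : C) (mul : H ⊗ H ⟶ H) (unit : 𝟙_ C ⟶ H) (comul : H ⟶ H ⊗ H)
  (counit : H ⟶ 𝟙_ C) (S : H ⟶ H)

theorem S1a (unit_right : (H ◁ unit) ≫ mul = (ρ_ H).hom) :
    (α_ H H H).hom ≫ (H ◁ (H ◁ S)) ≫ (H ◁ mul)
      = ((H ⊗ H) ◁ (S ≫ (λ_ H).inv ≫ (unit ▷ H))) ≫ tensorμ H H H H ≫ (mul ⊗ₘ mul) := by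
  have struct : ((H ⊗ H) ◁ (λ_ H).inv) ≫ tensorμ H H (𝟙_ C) H ≫ ((ρ_ H).hom ▷ (H ⊗ H))
      = (α_ H H H).hom := by
    dsimp [tensorμ]
    rw [braiding_tensorUnit_right]
    monoidal
  have nat : ((H ⊗ H) ◁ (unit ▷ H)) ≫ tensorμ H H H H
      = tensorμ H H (𝟙_ C) H ≫ ((H ◁ unit) ▷ (H ⊗ H)) := by
    have := tensorμ_natural (𝟙 H) (𝟙 H) unit (𝟙 H)
    simp only [tensorHom_id, id_tensorHom, MonoidalCategory.whiskerLeft_id,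
      MonoidalCategory.whiskerRight_id, id_tensorHom_id] at this
    simpa using this
  symm
  calc ((H ⊗ H) ◁ (S ≫ (λ_ H).inv ≫ (unit ▷ H))) ≫ tensorμ H H H H ≫ (mul ⊗ₘ mul)
      = ((H ⊗ H) ◁ S) ≫ ((H ⊗ H) ◁ (λ_ H).inv) ≫ (((H ⊗ H) ◁ (unit ▷ H)) ≫
          tensorμ H H H H) ≫ (mul ⊗ₘ mul) := by
        simp [MonoidalCategory.whiskerLeft_comp]
    _ = ((H ⊗ H) ◁ S) ≫ ((H ⊗ H) ◁ (λ_ H).inv) ≫ tensorμ H H (𝟙_ C) H ≫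
          ((H ◁ unit) ▷ (H ⊗ H)) ≫ (mul ▷ (H ⊗ H)) ≫ (H ◁ mul) := by
        rw [nat, MonoidalCategory.tensorHom_def]
        simp only [Category.assoc]
    _ = ((H ⊗ H) ◁ S) ≫ ((H ⊗ H) ◁ (λ_ H).inv) ≫ tensorμ H H (𝟙_ C) H ≫
          ((ρ_ H).hom ▷ (H ⊗ H)) ≫ (H ◁ mul) := by
        rw [← comp_whiskerRight_assoc, unit_right]
    _ = ((H ⊗ H) ◁ S) ≫ (α_ H H H).hom ≫ (H ◁ mul) := by
        slice_lhs 2 4 => rw [struct]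
    _ = (α_ H H H).hom ≫ (H ◁ (H ◁ S)) ≫ (H ◁ mul) := by
        rw [associator_naturality_right_assoc]

theorem S3a (unit_right : (H ◁ unit) ≫ mul = (ρ_ H).hom) :
    ((H ⊗ H) ◁ ((ρ_ H).inv ≫ (H ◁ unit))) ≫ tensorμ H H H H ≫ (mul ⊗ₘ mul)
      = (α_ H H H).hom ≫ (H ◁ (β_ H H).hom) ≫ (α_ H H H).inv ≫ (mul ▷ H) := by
  have hb : (β_ H H).hom ▷ (𝟙_ C) = (ρ_ (H ⊗ H)).hom ≫ (β_ H H).hom ≫ (ρ_ (H ⊗ H)).inv := by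
    rw [← rightUnitor_naturality]; simp
  have struct2 : ((H ⊗ H) ◁ (ρ_ H).inv) ≫ tensorμ H H H (𝟙_ C) ≫ ((H ⊗ H) ◁ (ρ_ H).hom)
      = (α_ H H H).hom ≫ (H ◁ (β_ H H).hom) ≫ (α_ H H H).inv := by
    dsimp [tensorμ]
    rw [hb]
    simp only [MonoidalCategory.whiskerLeft_comp, Category.assoc]
    have pre : ((H ⊗ H) ◁ (ρ_ H).inv) ≫ (α_ H H (H ⊗ 𝟙_ C)).hom ≫ (H ◁ (α_ H H (𝟙_ C)).inv) ≫
        (H ◁ (ρ_ (H ⊗ H)).hom) = (α_ H H H).hom := by monoidal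
    have post : (H ◁ (ρ_ (H ⊗ H)).inv) ≫ (H ◁ (α_ H H (𝟙_ C)).hom) ≫
        (α_ H H (H ⊗ 𝟙_ C)).inv ≫ ((H ⊗ H) ◁ (ρ_ H).hom) = (α_ H H H).inv := by monoidal
    calc ((H ⊗ H) ◁ (ρ_ H).inv) ≫ (α_ H H (H ⊗ 𝟙_ C)).hom ≫ (H ◁ (α_ H H (𝟙_ C)).inv) ≫
          (H ◁ (ρ_ (H ⊗ H)).hom) ≫ (H ◁ (β_ H H).hom) ≫ (H ◁ (ρ_ (H ⊗ H)).inv) ≫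
          (H ◁ (α_ H H (𝟙_ C)).hom) ≫ (α_ H H (H ⊗ 𝟙_ C)).inv ≫ ((H ⊗ H) ◁ (ρ_ H).hom)
        = (((H ⊗ H) ◁ (ρ_ H).inv) ≫ (α_ H H (H ⊗ 𝟙_ C)).hom ≫ (H ◁ (α_ H H (𝟙_ C)).inv) ≫
          (H ◁ (ρ_ (H ⊗ H)).hom)) ≫ (H ◁ (β_ H H).hom) ≫ ((H ◁ (ρ_ (H ⊗ H)).inv) ≫
          (H ◁ (α_ H H (𝟙_ C)).hom) ≫ (α_ H H (H ⊗ 𝟙_ C)).inv ≫ ((H ⊗ H) ◁ (ρ_ H).hom)) := by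
          simp only [Category.assoc]
      _ = (α_ H H H).hom ≫ (H ◁ (β_ H H).hom) ≫ (α_ H H H).inv := by rw [pre, post]
  have nat2 : ((H ⊗ H) ◁ (H ◁ unit)) ≫ tensorμ H H H H
      = tensorμ H H H (𝟙_ C) ≫ ((H ⊗ H) ◁ (H ◁ unit)) := by
    have := tensorμ_natural (𝟙 H) (𝟙 H) (𝟙 H) unit
    simp only [tensorHom_id, id_tensorHom, MonoidalCategory.whiskerLeft_id,
      MonoidalCategory.whiskerRight_id, id_tensorHom_id] at this
    simpa using this
  calc ((H ⊗ H) ◁ ((ρ_ H).inv ≫ (H ◁ unit))) ≫ tensorμ H H H H ≫ (mul ⊗ₘ mul)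
      = ((H ⊗ H) ◁ (ρ_ H).inv) ≫ (((H ⊗ H) ◁ (H ◁ unit)) ≫ tensorμ H H H H) ≫
          (mul ⊗ₘ mul) := by simp [MonoidalCategory.whiskerLeft_comp]
    _ = ((H ⊗ H) ◁ (ρ_ H).inv) ≫ tensorμ H H H (𝟙_ C) ≫ ((H ⊗ H) ◁ ((H ◁ unit) ≫ mul)) ≫
          (mul ▷ H) := by
        rw [nat2, tensorHom_def']
        simp only [Category.assoc, MonoidalCategory.whiskerLeft_comp]
    _ = (((H ⊗ H) ◁ (ρ_ H).inv) ≫ tensorμ H H H (𝟙_ C) ≫ ((H ⊗ H) ◁ (ρ_ H).hom)) ≫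
          (mul ▷ H) := by
        rw [unit_right]
        simp only [Category.assoc]
    _ = (α_ H H H).hom ≫ (H ◁ (β_ H H).hom) ≫ (α_ H H H).inv ≫ (mul ▷ H) := by
        rw [struct2]
        simp only [Category.assoc]

theorem starPure
    (unit_right : (H ◁ unit) ≫ mul = (ρ_ H).hom)
    (coassoc : comul ≫ (comul ▷ H) = comul ≫ (H ◁ comul) ≫ (α_ H H H).inv)
    (counit_right : comul ≫ (H ◁ counit) = (ρ_ H).inv)
    (antipode_right : comul ≫ (H ◁ S) ≫ mul = counit ≫ unit)
    (mc : mul ≫ comul = (comul ⊗ₘ comul) ≫ tensorμ H H H H ≫ (mul ⊗ₘ mul))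
    (Tassoc : ((tensorμ H H H H ≫ (mul ⊗ₘ mul)) ▷ (H ⊗ H)) ≫ (tensorμ H H H H ≫ (mul ⊗ₘ mul))
      = (α_ (H ⊗ H) (H ⊗ H) (H ⊗ H)).hom ≫ ((H ⊗ H) ◁ (tensorμ H H H H ≫ (mul ⊗ₘ mul))) ≫ (tensorμ H H H H ≫ (mul ⊗ₘ mul))) :
    (H ◁ comul) ≫ (α_ H H H).inv ≫ ((mul ≫ comul) ▷ H) ≫ (α_ H H H).hom ≫
        (H ◁ (H ◁ S)) ≫ (H ◁ mul)
      = (comul ▷ H) ≫ (α_ H H H).hom ≫ (H ◁ (β_ H H).hom) ≫ (α_ H H H).inv ≫ (mul ▷ H) := by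
  have S1a := S1a H mul unit S unit_right
  have S3a := S3a H mul unit unit_right
  have Tassoc' : (tensorμ H H H H ▷ (H ⊗ H)) ≫ ((mul ⊗ₘ mul) ▷ (H ⊗ H)) ≫
        tensorμ H H H H ≫ (mul ⊗ₘ mul)
      = (α_ (H ⊗ H) (H ⊗ H) (H ⊗ H)).hom ≫ ((H ⊗ H) ◁ (tensorμ H H H H ≫ (mul ⊗ₘ mul))) ≫ tensorμ H H H H ≫
        (mul ⊗ₘ mul) := by
    have := Tassoc
    simp only [comp_whiskerRight, Category.assoc] at this
    exact this
  -- S2 : the collapse lemma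
  have S2 : comul ≫ (comul ▷ H) ≫ ((H ⊗ H) ◁ (S ≫ (λ_ H).inv ≫ (unit ▷ H))) ≫ tensorμ H H H H ≫ (mul ⊗ₘ mul)
      = (ρ_ H).inv ≫ (H ◁ unit) := by
    calc comul ≫ (comul ▷ H) ≫ ((H ⊗ H) ◁ (S ≫ (λ_ H).inv ≫ (unit ▷ H))) ≫ tensorμ H H H H ≫ (mul ⊗ₘ mul)
        = comul ≫ (comul ▷ H) ≫ (α_ H H H).hom ≫ (H ◁ (H ◁ S)) ≫ (H ◁ mul) := by
          rw [← S1a]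
      _ = comul ≫ (H ◁ comul) ≫ (H ◁ (H ◁ S)) ≫ (H ◁ mul) := by
          rw [reassoc_of% coassoc]; simp
      _ = comul ≫ (H ◁ (comul ≫ (H ◁ S) ≫ mul)) := by
          simp [MonoidalCategory.whiskerLeft_comp]
      _ = comul ≫ (H ◁ counit) ≫ (H ◁ unit) := by
          rw [antipode_right]; simp [MonoidalCategory.whiskerLeft_comp]
      _ = (ρ_ H).inv ≫ (H ◁ unit) := by rw [reassoc_of% counit_right]
  -- S1 : regrouping via associativity of the braided tensor product algebra
  have S1 : (H ◁ comul) ≫ (α_ H H H).inv ≫ ((mul ≫ comul) ▷ H) ≫ (α_ H H H).hom ≫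
        (H ◁ (H ◁ S)) ≫ (H ◁ mul)
      = (comul ▷ H) ≫ ((H ⊗ H) ◁ (comul ≫ (comul ▷ H) ≫ ((H ⊗ H) ◁ (S ≫ (λ_ H).inv ≫ (unit ▷ H))) ≫
          tensorμ H H H H ≫ (mul ⊗ₘ mul))) ≫ tensorμ H H H H ≫ (mul ⊗ₘ mul) := by
    calc (H ◁ comul) ≫ (α_ H H H).inv ≫ ((mul ≫ comul) ▷ H) ≫ (α_ H H H).hom ≫
          (H ◁ (H ◁ S)) ≫ (H ◁ mul)
        = (H ◁ comul) ≫ (α_ H H H).inv ≫ ((mul ≫ comul) ▷ H) ≫ ((H ⊗ H) ◁ (S ≫ (λ_ H).inv ≫ (unit ▷ H))) ≫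
            tensorμ H H H H ≫ (mul ⊗ₘ mul) := by
          rw [S1a]
      _ = (H ◁ comul) ≫ (α_ H H H).inv ≫ ((H ⊗ H) ◁ (S ≫ (λ_ H).inv ≫ (unit ▷ H))) ≫ ((mul ≫ comul) ▷ (H ⊗ H)) ≫
            tensorμ H H H H ≫ (mul ⊗ₘ mul) := by
          rw [← whisker_exchange_assoc]
      _ = (H ◁ comul) ≫ (H ◁ (H ◁ (S ≫ (λ_ H).inv ≫ (unit ▷ H)))) ≫ (α_ H H (H ⊗ H)).inv ≫
            ((mul ≫ comul) ▷ (H ⊗ H)) ≫ tensorμ H H H H ≫ (mul ⊗ₘ mul) := by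
          rw [← associator_inv_naturality_right_assoc]
      _ = (H ◁ comul) ≫ (H ◁ (H ◁ (S ≫ (λ_ H).inv ≫ (unit ▷ H)))) ≫ (α_ H H (H ⊗ H)).inv ≫
            (((comul ⊗ₘ comul) ≫ tensorμ H H H H ≫ (mul ⊗ₘ mul)) ▷ (H ⊗ H)) ≫
            tensorμ H H H H ≫ (mul ⊗ₘ mul) := by
          rw [mc]
      _ = (H ◁ comul) ≫ (H ◁ (H ◁ (S ≫ (λ_ H).inv ≫ (unit ▷ H)))) ≫ (α_ H H (H ⊗ H)).inv ≫
            ((comul ⊗ₘ comul) ▷ (H ⊗ H)) ≫ (α_ (H ⊗ H) (H ⊗ H) (H ⊗ H)).hom ≫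
            ((H ⊗ H) ◁ (tensorμ H H H H ≫ (mul ⊗ₘ mul))) ≫ tensorμ H H H H ≫ (mul ⊗ₘ mul) := by
          simp only [comp_whiskerRight, Category.assoc]
          rw [Tassoc']
      _ = (H ◁ comul) ≫ (H ◁ (H ◁ (S ≫ (λ_ H).inv ≫ (unit ▷ H)))) ≫ (comul ▷ (H ⊗ (H ⊗ H))) ≫
            ((H ⊗ H) ◁ (comul ▷ (H ⊗ H))) ≫
            ((H ⊗ H) ◁ (tensorμ H H H H ≫ (mul ⊗ₘ mul))) ≫ tensorμ H H H H ≫ (mul ⊗ₘ mul) := by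
          rw [tensorHom_def comul comul, comp_whiskerRight]
          simp only [Category.assoc]
          rw [← associator_inv_naturality_left_assoc]
          rw [← associator_inv_naturality_middle_assoc]
          simp only [Iso.inv_hom_id_assoc]
      _ = (comul ▷ H) ≫ ((H ⊗ H) ◁ (comul ≫ (H ◁ (S ≫ (λ_ H).inv ≫ (unit ▷ H))))) ≫
            ((H ⊗ H) ◁ (comul ▷ (H ⊗ H))) ≫
            ((H ⊗ H) ◁ (tensorμ H H H H ≫ (mul ⊗ₘ mul))) ≫ tensorμ H H H H ≫ (mul ⊗ₘ mul) := by
          rw [← MonoidalCategory.whiskerLeft_comp_assoc]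
          rw [whisker_exchange_assoc]
      _ = (comul ▷ H) ≫ ((H ⊗ H) ◁ (comul ≫ (comul ▷ H) ≫ ((H ⊗ H) ◁ (S ≫ (λ_ H).inv ≫ (unit ▷ H))) ≫
            tensorμ H H H H ≫ (mul ⊗ₘ mul))) ≫ tensorμ H H H H ≫ (mul ⊗ₘ mul) := by
          have inner : ((H ⊗ H) ◁ (comul ≫ (H ◁ (S ≫ (λ_ H).inv ≫ (unit ▷ H))))) ≫
                ((H ⊗ H) ◁ (comul ▷ (H ⊗ H))) ≫
                ((H ⊗ H) ◁ (tensorμ H H H H ≫ (mul ⊗ₘ mul)))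
              = (H ⊗ H) ◁ (comul ≫ (comul ▷ H) ≫
                  ((H ⊗ H) ◁ (S ≫ (λ_ H).inv ≫ (unit ▷ H))) ≫
                  tensorμ H H H H ≫ (mul ⊗ₘ mul)) := by
            rw [← MonoidalCategory.whiskerLeft_comp, ← MonoidalCategory.whiskerLeft_comp]
            congr 1
            simp only [Category.assoc]
            rw [whisker_exchange_assoc]
          rw [reassoc_of% inner]
  rw [S1, S2, S3a]

end Pure

end

end BraidedHopfAlgebraProof

/-- The integral element `Λ` is a two-sided unit for the Frobenius product
`μ̃ := (id ⊗ ev) ∘ (Δ ⊗ id)`, where `ev := λ ∘ μ ∘ (id ⊗ S)`. -/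
theorem integral_frobenius_unit (A : BraidedHopfAlgebra C) [IsIso A.antipode]
    (l : A.H ⟶ 𝟙_ C) (L : 𝟙_ C ⟶ A.H)
    (hl : A.comul ≫ (𝟙 A.H ⊗ₘ l) ≫ (ρ_ A.H).hom = l ≫ A.unit)
    (hL : (L ⊗ₘ 𝟙 A.H) ≫ A.mul = (λ_ A.H).hom ≫ A.counit ≫ L)
    (hlL : L ≫ l = 𝟙 (𝟙_ C))
    (hSL : L ≫ A.antipode = L)
    (hlS : A.antipode ≫ l = l) :
    (λ_ A.H).inv ≫ (L ⊗ₘ 𝟙 A.H) ≫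
        ((A.comul ⊗ₘ 𝟙 A.H) ≫ (α_ A.H A.H A.H).hom ≫
      (𝟙 A.H ⊗ₘ ((𝟙 A.H ⊗ₘ A.antipode) ≫ A.mul ≫ l)) ≫ (ρ_ A.H).hom) = 𝟙 A.H ∧
      (ρ_ A.H).inv ≫ (𝟙 A.H ⊗ₘ L) ≫
        ((A.comul ⊗ₘ 𝟙 A.H) ≫ (α_ A.H A.H A.H).hom ≫
      (𝟙 A.H ⊗ₘ ((𝟙 A.H ⊗ₘ A.antipode) ≫ A.mul ≫ l)) ≫ (ρ_ A.H).hom) = 𝟙 A.H := by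
  have mc : A.mul ≫ A.comul
      = (A.comul ⊗ₘ A.comul) ≫ tensorμ A.H A.H A.H A.H ≫ (A.mul ⊗ₘ A.mul) := by
    rw [A.mul_comul]
    dsimp [tensorμ]
    simp only [tensorHom_id, id_tensorHom, Category.assoc]
  have Tassoc := MonObj.Mon_tensor_mul_assoc (C := C) A.H A.H
  have sp := BraidedHopfAlgebraProof.starPure A.H A.mul A.unit A.comul A.counit A.antipode
    (by simpa [id_tensorHom] using A.unit_right)
    (by simpa [tensorHom_id, id_tensorHom] using A.comul_coassoc)
    (by simpa [id_tensorHom] using A.counit_right)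
    (by simpa [id_tensorHom] using A.antipode_right)
    mc Tassoc
  -- whiskered hypotheses
  have w_unit_left : (A.unit ▷ A.H) ≫ A.mul = (λ_ A.H).hom := by
    simpa [tensorHom_id] using A.unit_left
  have w_counit_left : A.comul ≫ (A.counit ▷ A.H) = (λ_ A.H).inv := by
    simpa [tensorHom_id] using A.counit_left
  have w_counit_right : A.comul ≫ (A.H ◁ A.counit) = (ρ_ A.H).inv := by
    simpa [id_tensorHom] using A.counit_right
  have w_hl : A.comul ≫ (A.H ◁ l) ≫ (ρ_ A.H).hom = l ≫ A.unit := by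
    simpa [id_tensorHom] using hl
  have w_hL : (L ▷ A.H) ≫ A.mul = (λ_ A.H).hom ≫ A.counit ≫ L := by
    simpa [tensorHom_id] using hL
  -- the right-unit core lemma : l ∘ (z ↦ z·Λ) = ε
  have key : (ρ_ A.H).inv ≫ (A.H ◁ L) ≫ A.mul ≫ l = A.counit := by
    rw [← hlS]
    calc (ρ_ A.H).inv ≫ (A.H ◁ L) ≫ A.mul ≫ A.antipode ≫ l
        = (ρ_ A.H).inv ≫ (A.H ◁ L) ≫ (A.antipode ⊗ₘ A.antipode) ≫ (β_ A.H A.H).hom ≫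
            A.mul ≫ l := by
          rw [reassoc_of% (BraidedHopfAlgebraProof.mul_antipode A)]
      _ = (ρ_ A.H).inv ≫ (A.antipode ▷ 𝟙_ C) ≫ (A.H ◁ (L ≫ A.antipode)) ≫
            (β_ A.H A.H).hom ≫ A.mul ≫ l := by
          rw [MonoidalCategory.tensorHom_def]
          slice_lhs 2 3 => rw [whisker_exchange]
          simp [MonoidalCategory.whiskerLeft_comp]
      _ = A.antipode ≫ (ρ_ A.H).inv ≫ (A.H ◁ L) ≫ (β_ A.H A.H).hom ≫ A.mul ≫ l := by
          rw [hSL, rightUnitor_inv_naturality_assoc]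
      _ = A.antipode ≫ (ρ_ A.H).inv ≫ (β_ A.H (𝟙_ C)).hom ≫ (L ▷ A.H) ≫ A.mul ≫ l := by
          rw [BraidedCategory.braiding_naturality_right_assoc]
      _ = A.antipode ≫ (λ_ A.H).inv ≫ (L ▷ A.H) ≫ A.mul ≫ l := by
          rw [braiding_tensorUnit_right]; simp
      _ = A.antipode ≫ (λ_ A.H).inv ≫ (λ_ A.H).hom ≫ A.counit ≫ L ≫ l := by
          rw [reassoc_of% w_hL]
      _ = A.counit := by
          rw [hlL]
          simp [BraidedHopfAlgebraProof.antipode_counit A]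
  -- the left-unit core lemma (uses the integral property of L)
  have hLd : (L ▷ A.H) ≫ (A.mul ≫ A.comul)
      = (λ_ A.H).hom ≫ A.counit ≫ L ≫ A.comul := by
    rw [← Category.assoc, w_hL]
    simp only [Category.assoc]
  have prefix1 : (𝟙_ C ◁ A.comul) ≫ (α_ (𝟙_ C) A.H A.H).inv ≫
      (((λ_ A.H).hom ≫ A.counit) ▷ A.H) = 𝟙 (𝟙_ C ⊗ A.H) := by
    have : (λ_ A.H).hom ≫ A.counit = (𝟙_ C ◁ A.counit) ≫ (λ_ (𝟙_ C)).hom := by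
      rw [leftUnitor_naturality]
    rw [this, comp_whiskerRight]
    rw [← associator_inv_naturality_middle_assoc]
    rw [← MonoidalCategory.whiskerLeft_comp_assoc, w_counit_left]
    monoidal
  have starL : (L ▷ A.H) ≫ (A.H ◁ A.comul) ≫ (α_ A.H A.H A.H).inv ≫
        ((A.mul ≫ A.comul) ▷ A.H) ≫ (α_ A.H A.H A.H).hom ≫
        (A.H ◁ (A.H ◁ A.antipode)) ≫ (A.H ◁ A.mul)
      = (L ▷ A.H) ≫ (A.comul ▷ A.H) ≫ (α_ A.H A.H A.H).hom ≫
        (A.H ◁ (A.H ◁ A.antipode)) ≫ (A.H ◁ A.mul) := by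
    calc (L ▷ A.H) ≫ (A.H ◁ A.comul) ≫ (α_ A.H A.H A.H).inv ≫
          ((A.mul ≫ A.comul) ▷ A.H) ≫ (α_ A.H A.H A.H).hom ≫
          (A.H ◁ (A.H ◁ A.antipode)) ≫ (A.H ◁ A.mul)
        = (𝟙_ C ◁ A.comul) ≫ (L ▷ (A.H ⊗ A.H)) ≫ (α_ A.H A.H A.H).inv ≫
            ((A.mul ≫ A.comul) ▷ A.H) ≫ (α_ A.H A.H A.H).hom ≫
            (A.H ◁ (A.H ◁ A.antipode)) ≫ (A.H ◁ A.mul) := by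
          rw [← whisker_exchange_assoc]
      _ = (𝟙_ C ◁ A.comul) ≫ (α_ (𝟙_ C) A.H A.H).inv ≫ ((L ▷ A.H) ▷ A.H) ≫
            ((A.mul ≫ A.comul) ▷ A.H) ≫ (α_ A.H A.H A.H).hom ≫
            (A.H ◁ (A.H ◁ A.antipode)) ≫ (A.H ◁ A.mul) := by
          rw [associator_inv_naturality_left_assoc]
      _ = (𝟙_ C ◁ A.comul) ≫ (α_ (𝟙_ C) A.H A.H).inv ≫
            (((λ_ A.H).hom ≫ A.counit ≫ L ≫ A.comul) ▷ A.H) ≫ (α_ A.H A.H A.H).hom ≫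
            (A.H ◁ (A.H ◁ A.antipode)) ≫ (A.H ◁ A.mul) := by
          rw [← comp_whiskerRight_assoc, hLd]
      _ = ((𝟙_ C ◁ A.comul) ≫ (α_ (𝟙_ C) A.H A.H).inv ≫
            (((λ_ A.H).hom ≫ A.counit) ▷ A.H)) ≫ ((L ≫ A.comul) ▷ A.H) ≫
            (α_ A.H A.H A.H).hom ≫ (A.H ◁ (A.H ◁ A.antipode)) ≫ (A.H ◁ A.mul) := by
          simp only [comp_whiskerRight, Category.assoc]
      _ = ((L ≫ A.comul) ▷ A.H) ≫ (α_ A.H A.H A.H).hom ≫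
            (A.H ◁ (A.H ◁ A.antipode)) ≫ (A.H ◁ A.mul) := by
          rw [prefix1, Category.id_comp]
      _ = (L ▷ A.H) ≫ (A.comul ▷ A.H) ≫ (α_ A.H A.H A.H).hom ≫
            (A.H ◁ (A.H ◁ A.antipode)) ≫ (A.H ◁ A.mul) := by
          simp only [comp_whiskerRight, Category.assoc]
  -- the combined star identity
  have star : (L ▷ A.H) ≫ (A.comul ▷ A.H) ≫ (α_ A.H A.H A.H).hom ≫
        (A.H ◁ (A.H ◁ A.antipode)) ≫ (A.H ◁ A.mul)
      = (L ▷ A.H) ≫ (A.comul ▷ A.H) ≫ (α_ A.H A.H A.H).hom ≫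
        (A.H ◁ (β_ A.H A.H).hom) ≫ (α_ A.H A.H A.H).inv ≫ (A.mul ▷ A.H) := by
    rw [← starL, sp]
  have coh2 : (α_ A.H A.H (𝟙_ C)).inv ≫ (ρ_ (A.H ⊗ A.H)).hom = A.H ◁ (ρ_ A.H).hom := by
    monoidal
  have hbl : (β_ A.H A.H).hom ≫ (A.H ◁ l) ≫ (ρ_ A.H).hom = (l ▷ A.H) ≫ (λ_ A.H).hom := by
    rw [← BraidedCategory.braiding_naturality_left_assoc]
    rw [braiding_tensorUnit_left]
    simp
  constructor
  · -- left unit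
    simp only [tensorHom_id, id_tensorHom]
    calc (λ_ A.H).inv ≫ (L ▷ A.H) ≫ (A.comul ▷ A.H) ≫ (α_ A.H A.H A.H).hom ≫
          (A.H ◁ ((A.H ◁ A.antipode) ≫ A.mul ≫ l)) ≫ (ρ_ A.H).hom
        = (λ_ A.H).inv ≫ ((L ▷ A.H) ≫ (A.comul ▷ A.H) ≫ (α_ A.H A.H A.H).hom ≫
            (A.H ◁ (A.H ◁ A.antipode)) ≫ (A.H ◁ A.mul)) ≫ (A.H ◁ l) ≫ (ρ_ A.H).hom := by
          simp only [MonoidalCategory.whiskerLeft_comp, Category.assoc]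
      _ = (λ_ A.H).inv ≫ (L ▷ A.H) ≫ (A.comul ▷ A.H) ≫ (α_ A.H A.H A.H).hom ≫
            (A.H ◁ (β_ A.H A.H).hom) ≫ (α_ A.H A.H A.H).inv ≫ (A.mul ▷ A.H) ≫
            (A.H ◁ l) ≫ (ρ_ A.H).hom := by
          rw [star]
          simp only [Category.assoc]
      _ = (λ_ A.H).inv ≫ (L ▷ A.H) ≫ (A.comul ▷ A.H) ≫ (α_ A.H A.H A.H).hom ≫
            (A.H ◁ (β_ A.H A.H).hom) ≫ (α_ A.H A.H A.H).inv ≫ ((A.H ⊗ A.H) ◁ l) ≫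
            (A.mul ▷ 𝟙_ C) ≫ (ρ_ A.H).hom := by
          rw [← whisker_exchange_assoc]
      _ = (λ_ A.H).inv ≫ (L ▷ A.H) ≫ (A.comul ▷ A.H) ≫ (α_ A.H A.H A.H).hom ≫
            (A.H ◁ (β_ A.H A.H).hom) ≫ (A.H ◁ (A.H ◁ l)) ≫ (α_ A.H A.H (𝟙_ C)).inv ≫
            (ρ_ (A.H ⊗ A.H)).hom ≫ A.mul := by
          rw [← associator_inv_naturality_right_assoc, rightUnitor_naturality]
      _ = (λ_ A.H).inv ≫ (L ▷ A.H) ≫ (A.comul ▷ A.H) ≫ (α_ A.H A.H A.H).hom ≫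
            (A.H ◁ ((β_ A.H A.H).hom ≫ (A.H ◁ l) ≫ (ρ_ A.H).hom)) ≫ A.mul := by
          rw [reassoc_of% coh2]
          simp only [MonoidalCategory.whiskerLeft_comp, Category.assoc]
      _ = (λ_ A.H).inv ≫ (L ▷ A.H) ≫ (A.comul ▷ A.H) ≫ (α_ A.H A.H A.H).hom ≫
            (A.H ◁ (l ▷ A.H)) ≫ (A.H ◁ (λ_ A.H).hom) ≫ A.mul := by
          rw [hbl]
          simp only [MonoidalCategory.whiskerLeft_comp, Category.assoc]
      _ = (λ_ A.H).inv ≫ (L ▷ A.H) ≫ (A.comul ▷ A.H) ≫ ((A.H ◁ l) ▷ A.H) ≫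
            (α_ A.H (𝟙_ C) A.H).hom ≫ (A.H ◁ (λ_ A.H).hom) ≫ A.mul := by
          rw [← associator_naturality_middle_assoc]
      _ = (λ_ A.H).inv ≫ (L ▷ A.H) ≫ (A.comul ▷ A.H) ≫ ((A.H ◁ l) ▷ A.H) ≫
            ((ρ_ A.H).hom ▷ A.H) ≫ A.mul := by
          rw [MonoidalCategory.triangle_assoc]
      _ = (λ_ A.H).inv ≫ ((L ≫ A.comul ≫ (A.H ◁ l) ≫ (ρ_ A.H).hom) ▷ A.H) ≫ A.mul := by
          simp only [comp_whiskerRight, Category.assoc]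
      _ = (λ_ A.H).inv ≫ ((L ≫ l ≫ A.unit) ▷ A.H) ≫ A.mul := by
          rw [w_hl]
      _ = 𝟙 A.H := by
          rw [← Category.assoc L l, hlL]
          simp [w_unit_left]
  · -- right unit
    simp only [tensorHom_id, id_tensorHom]
    calc (ρ_ A.H).inv ≫ (A.H ◁ L) ≫ (A.comul ▷ A.H) ≫ (α_ A.H A.H A.H).hom ≫
          (A.H ◁ ((A.H ◁ A.antipode) ≫ A.mul ≫ l)) ≫ (ρ_ A.H).hom
        = (ρ_ A.H).inv ≫ (A.comul ▷ 𝟙_ C) ≫ ((A.H ⊗ A.H) ◁ L) ≫ (α_ A.H A.H A.H).hom ≫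
            (A.H ◁ ((A.H ◁ A.antipode) ≫ A.mul ≫ l)) ≫ (ρ_ A.H).hom := by
          rw [whisker_exchange_assoc]
      _ = A.comul ≫ (ρ_ (A.H ⊗ A.H)).inv ≫ (α_ A.H A.H (𝟙_ C)).hom ≫
            (A.H ◁ (A.H ◁ L)) ≫
            (A.H ◁ ((A.H ◁ A.antipode) ≫ A.mul ≫ l)) ≫ (ρ_ A.H).hom := by
          rw [← rightUnitor_inv_naturality_assoc, associator_naturality_right_assoc]
      _ = A.comul ≫ (A.H ◁ ((ρ_ A.H).inv ≫ (A.H ◁ L) ≫ (A.H ◁ A.antipode) ≫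
            A.mul ≫ l)) ≫ (ρ_ A.H).hom := by
          have coh3 : (ρ_ (A.H ⊗ A.H)).inv ≫ (α_ A.H A.H (𝟙_ C)).hom
              = A.H ◁ (ρ_ A.H).inv := by monoidal
          rw [reassoc_of% coh3]
          simp only [MonoidalCategory.whiskerLeft_comp, Category.assoc]
      _ = A.comul ≫ (A.H ◁ A.counit) ≫ (ρ_ A.H).hom := by
          have inner : (ρ_ A.H).inv ≫ (A.H ◁ L) ≫ (A.H ◁ A.antipode) ≫ A.mul ≫ l
              = A.counit := by
            rw [← MonoidalCategory.whiskerLeft_comp_assoc, hSL]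
            exact key
          rw [inner]
      _ = 𝟙 A.H := by rw [reassoc_of% w_counit_right]; simp
end
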